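/- Let X be a discrete metric space with bounded geometry, ε > 0, L > 0, and suppose T ∈ B(ℓ²(X)) satisfies ‖[T,f]‖ < ε for every L-Lipschitz f ∈ ℓ∞(X) of norm 1. Let v ∈ ℓ²(X) be a unit vector and set V := { x ∈ X : d(x, supp v) < 1/L }. Then ‖T v‖ ≤ ‖χ_V (T v)‖ + ε. -/

import Mathlib

open scoped ENNReal
open Metric Set Function

noncomputable section

variable {X : Type*}

/-- The pointwise product of an `ℓ∞` function and an `ℓ²` function is again `ℓ²`. -/
theorem memℓp_two_mul (f : lp (fun _ : X => ℂ) ∞) (ξ : lp (fun _ : X => ℂ) 2) :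
    Memℓp (fun x => f x * ξ x) 2 := by
  apply memℓp_gen
  have h2 : (2 : ℝ≥0∞).toReal = 2 := by norm_num
  rw [h2]
  have hsum : Summable fun x => ‖f‖ ^ (2:ℝ) * ‖ξ x‖ ^ (2:ℝ) :=
    (by simpa [h2] using (lp.memℓp ξ).summable (by rw [h2]; norm_num) :
      Summable fun x => ‖ξ x‖ ^ (2:ℝ)).mul_left _
  refine Summable.of_nonneg_of_le (fun x => by positivity) (fun x => ?_) hsum
  have h1 : ‖f x * ξ x‖ ≤ ‖f‖ * ‖ξ x‖ := by
    rw [norm_mul]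
    exact mul_le_mul_of_nonneg_right (lp.norm_apply_le_norm (by norm_num) f x) (norm_nonneg _)
  calc ‖f x * ξ x‖ ^ (2:ℝ) ≤ (‖f‖ * ‖ξ x‖) ^ (2:ℝ) := by
        gcongr
    _ = ‖f‖ ^ (2:ℝ) * ‖ξ x‖ ^ (2:ℝ) := by
        rw [Real.mul_rpow (norm_nonneg _) (norm_nonneg _)]

/-- Multiplication by a bounded function `f ∈ ℓ∞(X)`, as a bounded operator on `ℓ²(X)`. -/
def mulOp (f : lp (fun _ : X => ℂ) ∞) :
    lp (fun _ : X => ℂ) 2 →L[ℂ] lp (fun _ : X => ℂ) 2 :=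
  LinearMap.mkContinuous
    { toFun := fun ξ => ⟨fun x => f x * ξ x, memℓp_two_mul f ξ⟩
      map_add' := fun ξ η => Subtype.ext <| funext fun x => by
        simp only [lp.coeFn_add, Pi.add_apply, mul_add]
      map_smul' := fun c ξ => Subtype.ext <| funext fun x => by
        simp only [lp.coeFn_smul, Pi.smul_apply, smul_eq_mul, RingHom.id_apply]
        ring }
    ‖f‖ (by
      intro ξ
      refine lp.norm_le_of_forall_sum_le (by norm_num) (by positivity) fun s => ?_
      have hb : ∀ x ∈ s, ‖f x * ξ x‖ ^ ((2:ℝ≥0∞).toReal)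
          ≤ ‖f‖ ^ ((2:ℝ≥0∞).toReal) * ‖ξ x‖ ^ ((2:ℝ≥0∞).toReal) := by
        intro x _
        rw [← Real.mul_rpow (norm_nonneg _) (norm_nonneg _)]
        refine Real.rpow_le_rpow (norm_nonneg _) ?_ (by norm_num)
        rw [norm_mul]
        exact mul_le_mul_of_nonneg_right (lp.norm_apply_le_norm (by norm_num) f x) (norm_nonneg _)
      calc ∑ x ∈ s, ‖f x * ξ x‖ ^ ((2:ℝ≥0∞).toReal)
          ≤ ∑ x ∈ s, ‖f‖ ^ ((2:ℝ≥0∞).toReal) * ‖ξ x‖ ^ ((2:ℝ≥0∞).toReal) :=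
            Finset.sum_le_sum hb
        _ = ‖f‖ ^ ((2:ℝ≥0∞).toReal) * ∑ x ∈ s, ‖ξ x‖ ^ ((2:ℝ≥0∞).toReal) := by
            rw [Finset.mul_sum]
        _ ≤ ‖f‖ ^ ((2:ℝ≥0∞).toReal) * ‖ξ‖ ^ ((2:ℝ≥0∞).toReal) :=
            mul_le_mul_of_nonneg_left (lp.sum_rpow_le_norm_rpow (by norm_num) ξ s)
              (Real.rpow_nonneg (norm_nonneg _) _)
        _ = (‖f‖ * ‖ξ‖) ^ ((2:ℝ≥0∞).toReal) :=
            (Real.mul_rpow (norm_nonneg _) (norm_nonneg _)).symm)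

/-- The indicator function of a set `A ⊆ X`, as an element of `ℓ∞(X)`. -/
def indLp (A : Set X) : lp (fun _ : X => ℂ) ∞ :=
  ⟨fun x => A.indicator (fun _ => (1 : ℂ)) x,
    memℓp_infty ⟨1, by
      rintro r ⟨x, rfl⟩
      by_cases h : x ∈ A <;> simp [Set.indicator_of_mem, Set.indicator_of_notMem, h]⟩⟩

/-- Multiplication by the characteristic function of `A ⊆ X` on `ℓ²(X)`. -/
def indOp (A : Set X) :
    lp (fun _ : X => ℂ) 2 →L[ℂ] lp (fun _ : X => ℂ) 2 :=
  mulOp (indLp A)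


/-- Monotonicity of the `ℓ²` norm under pointwise domination. -/
theorem lp_two_norm_mono {ξ η : lp (fun _ : X => ℂ) 2}
    (h : ∀ x, ‖ξ x‖ ≤ ‖η x‖) : ‖ξ‖ ≤ ‖η‖ := by
  refine lp.norm_le_of_forall_sum_le (by norm_num) (norm_nonneg η) fun s => ?_
  calc ∑ x ∈ s, ‖ξ x‖ ^ ((2:ℝ≥0∞).toReal)
      ≤ ∑ x ∈ s, ‖η x‖ ^ ((2:ℝ≥0∞).toReal) := by
        refine Finset.sum_le_sum fun x _ => ?_
        exact Real.rpow_le_rpow (norm_nonneg _) (h x) (by norm_num)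
    _ ≤ ‖η‖ ^ ((2:ℝ≥0∞).toReal) := lp.sum_rpow_le_norm_rpow (by norm_num) η s

/-- if `T` `ε`-commutes with every norm-one `L`-Lipschitz function, then for
any unit vector `v`, the vector `T v` is `ε`-supported on the `1/L`-neighbourhood of the
support of `v`. -/
theorem commutant_support_estimate [MetricSpace X]
    (ε L : ℝ) (hε : 0 < ε) (hL : 0 < L)
    (T : lp (fun _ : X => ℂ) 2 →L[ℂ] lp (fun _ : X => ℂ) 2)
    (hT : ∀ f : lp (fun _ : X => ℂ) ∞, ‖f‖ = 1 →
      (∀ x y : X, ‖f x - f y‖ ≤ L * dist x y) →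
      ‖T ∘L mulOp f - mulOp f ∘L T‖ < ε)
    (v : lp (fun _ : X => ℂ) 2) (hv : ‖v‖ = 1) :
    ‖T v‖ ≤
      ‖indOp {x : X | Metric.infDist x (Function.support (⇑v : X → ℂ)) < 1 / L} (T v)‖ + ε := by
  set A := Function.support (⇑v : X → ℂ) with hA
  have hvne : v ≠ 0 := by intro h; rw [h, norm_zero] at hv; exact zero_ne_one hv
  have hAne : A.Nonempty := by
    rcases Function.ne_iff.mp (fun h => hvne (Subtype.ext (funext fun x => by
      simpa using congrFun h x))) with ⟨x, hx⟩
    exact ⟨x, by simpa [hA, Function.mem_support] using hx⟩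
  have : Nonempty X := ⟨hAne.choose⟩
  -- the cutoff function
  set g : X → ℝ := fun x => max 0 (1 - L * Metric.infDist x A) with hg
  have hg01 : ∀ x, 0 ≤ g x ∧ g x ≤ 1 := fun x =>
    ⟨le_max_left _ _, max_le (by norm_num) (by
      have := Metric.infDist_nonneg (x := x) (s := A); nlinarith)⟩
  have hf_mem : Memℓp (fun x => ((g x : ℝ) : ℂ)) ∞ := by
    apply memℓp_infty
    refine ⟨1, ?_⟩
    rintro r ⟨x, rfl⟩
    simp only [Complex.norm_real, Real.norm_eq_abs, abs_of_nonneg (hg01 x).1]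
    exact (hg01 x).2
  set f : lp (fun _ : X => ℂ) ∞ := ⟨fun x => ((g x : ℝ) : ℂ), hf_mem⟩ with hf
  have hfapply : ∀ x, f x = ((g x : ℝ) : ℂ) := fun _ => rfl
  have hf_one_on : ∀ x ∈ A, f x = 1 := by
    intro x hx
    have : Metric.infDist x A = 0 := Metric.infDist_zero_of_mem hx
    simp [hfapply, hg, this]
  have hfnorm : ‖f‖ = 1 := by
    apply le_antisymm
    · refine lp.norm_le_of_forall_le zero_le_one fun x => ?_
      simp only [hfapply, Complex.norm_real, Real.norm_eq_abs, abs_of_nonneg (hg01 x).1]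
      exact (hg01 x).2
    · rcases hAne with ⟨x, hx⟩
      have := lp.norm_apply_le_norm (by norm_num) f x
      rw [hf_one_on x hx, norm_one] at this
      exact this
  have hflip : ∀ x y : X, ‖f x - f y‖ ≤ L * dist x y := by
    intro x y
    have h1 : |Metric.infDist x A - Metric.infDist y A| ≤ dist x y :=
      abs_sub_le_iff.mpr ⟨by
        have := Metric.infDist_le_infDist_add_dist (x := x) (y := y) (s := A); linarith,
        by have := Metric.infDist_le_infDist_add_dist (x := y) (y := x) (s := A)
           rw [dist_comm]; linarith⟩
    have h2 : |g x - g y| ≤ L * dist x y := by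
      have := abs_max_sub_max_le_abs (1 - L * Metric.infDist x A)
        (1 - L * Metric.infDist y A) 0
      have h3 : |(1 - L * Metric.infDist x A) - (1 - L * Metric.infDist y A)|
          = L * |Metric.infDist x A - Metric.infDist y A| := by
        rw [show (1 - L * Metric.infDist x A) - (1 - L * Metric.infDist y A)
            = L * (Metric.infDist y A - Metric.infDist x A) by ring,
          abs_mul, abs_of_pos hL, abs_sub_comm]
      calc |g x - g y| = |max 0 (1 - L * Metric.infDist x A)
              - max 0 (1 - L * Metric.infDist y A)| := by
            simp [hg, max_comm]
        _ ≤ |(1 - L * Metric.infDist x A) - (1 - L * Metric.infDist y A)| := by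
            simpa [max_comm] using abs_max_sub_max_le_abs
              (1 - L * Metric.infDist x A) (1 - L * Metric.infDist y A) 0
        _ = L * |Metric.infDist x A - Metric.infDist y A| := h3
        _ ≤ L * dist x y := by
            exact mul_le_mul_of_nonneg_left h1 hL.le
    calc ‖f x - f y‖ = |g x - g y| := by
          simp only [hfapply]
          rw [← Complex.ofReal_sub, Complex.norm_real, Real.norm_eq_abs]
      _ ≤ L * dist x y := h2
  have hfv : mulOp f v = v := by
    apply Subtype.ext; funext x
    show f x * v x = v x
    by_cases hx : x ∈ A
    · rw [hf_one_on x hx, one_mul]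
    · have : v x = 0 := by simpa [hA, Function.mem_support] using hx
      rw [this, mul_zero]
  set V : Set X := {x : X | Metric.infDist x A < 1 / L} with hV
  have hzero : ∀ x, x ∉ V → f x = 0 := by
    intro x hx
    have hge : 1 / L ≤ Metric.infDist x A := not_lt.mp hx
    have : 1 - L * Metric.infDist x A ≤ 0 := by
      rw [div_le_iff₀ hL] at hge; nlinarith
    simp [hfapply, hg, max_eq_left this]
  have hdom : ‖mulOp f (T v)‖ ≤ ‖indOp V (T v)‖ := by
    apply lp_two_norm_mono
    intro x
    show ‖f x * (T v) x‖ ≤ ‖indLp V x * (T v) x‖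
    by_cases hx : x ∈ V
    · have : indLp V x = 1 := by simp [indLp, Set.indicator_of_mem hx]
      rw [this, one_mul, norm_mul]
      calc ‖f x‖ * ‖(T v) x‖ ≤ 1 * ‖(T v) x‖ := by
            refine mul_le_mul_of_nonneg_right ?_ (norm_nonneg _)
            simp only [hfapply, Complex.norm_real, Real.norm_eq_abs,
              abs_of_nonneg (hg01 x).1]
            exact (hg01 x).2
        _ = ‖(T v) x‖ := one_mul _
    · rw [hzero x hx, zero_mul, norm_zero]; exact norm_nonneg _
  have key : T v = (T ∘L mulOp f - mulOp f ∘L T) v + mulOp f (T v) := by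
    simp [ContinuousLinearMap.sub_apply, ContinuousLinearMap.comp_apply, hfv]
  calc ‖T v‖ ≤ ‖(T ∘L mulOp f - mulOp f ∘L T) v‖ + ‖mulOp f (T v)‖ := by
        conv_lhs => rw [key]
        exact norm_add_le _ _
    _ ≤ ‖T ∘L mulOp f - mulOp f ∘L T‖ * ‖v‖ + ‖indOp V (T v)‖ :=
        add_le_add ((T ∘L mulOp f - mulOp f ∘L T).le_opNorm v) hdom
    _ ≤ ε * 1 + ‖indOp V (T v)‖ := by
        rw [hv]
        exact add_le_add (mul_le_mul_of_nonneg_right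
          (hT f hfnorm hflip).le (by norm_num)) le_rfl
    _ = ‖indOp V (T v)‖ + ε := by ring
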